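/- (Claim 2, return identity.) Let ε₀ > 0, let U : (−ε₀, ε₀) → ℝ be real-analytic with U(0) = √6 / 2, set h(s) = s·U(s), and assume (1 + s²)·cos(h(s))·sin(h(s)) = h(s) for all s ∈ (−ε₀, ε₀) (such h exists by the paper's Lemma 3.1). Define f(x,y) = y²·cos(h(x²+y²)) − x·y·sin(h(x²+y²)) and g(x,y) = (1/2)·x·y·(x²+y²)² for x²+y² < ε₀. Then for every r₀ with 0 < r₀² < ε₀, setting t₀ = h(r₀²), one has: f(r₀, 0) = 0 and g(r₀, 0) = 0; f(r₀·cos t₀, r₀·sin t₀) = 0 and g(r₀·cos t₀, r₀·sin t₀) = (r₀²/4)·(2t₀ − sin(2t₀)); moreover t₀ > 0 for all sufficiently small r₀ > 0, and t₀ → 0 as r₀ → 0⁺. (Hence the orbit of the vector field (−y, x, 0, y²) through (r₀, 0, 0, 0) meets the surface {z = f(x,y), w = g(x,y)} at times 0 and t₀.) -/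

import Mathlib

open Real

/-- **Claim 2**, return identity: the orbit of `(−y, x, 0, y²)` through `(r₀, 0, 0, 0)`
meets the surface `{z = f(x,y), w = g(x,y)}` again at time `t₀ = h(r₀²)`, a positive time
which tends to `0` as `r₀ → 0⁺`. -/
theorem claim2_return_identity
    (ε₀ : ℝ) (hε₀ : 0 < ε₀)
    (U : ℝ → ℝ) (hU : AnalyticOnNhd ℝ U (Set.Ioo (-ε₀) ε₀))
    (hU0 : U 0 = Real.sqrt 6 / 2)
    (h : ℝ → ℝ) (hh : ∀ s, h s = s * U s)
    (hsol : ∀ s ∈ Set.Ioo (-ε₀) ε₀, (1 + s ^ 2) * cos (h s) * sin (h s) = h s)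
    (f g : ℝ → ℝ → ℝ)
    (hf : ∀ x y : ℝ, x ^ 2 + y ^ 2 < ε₀ →
      f x y = y ^ 2 * cos (h (x ^ 2 + y ^ 2)) - x * y * sin (h (x ^ 2 + y ^ 2)))
    (hg : ∀ x y : ℝ, x ^ 2 + y ^ 2 < ε₀ →
      g x y = (1 / 2) * x * y * (x ^ 2 + y ^ 2) ^ 2) :
    (∀ r₀ : ℝ, 0 < r₀ → r₀ ^ 2 < ε₀ →
      f r₀ 0 = 0 ∧ g r₀ 0 = 0 ∧
      f (r₀ * cos (h (r₀ ^ 2))) (r₀ * sin (h (r₀ ^ 2))) = 0 ∧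
      g (r₀ * cos (h (r₀ ^ 2))) (r₀ * sin (h (r₀ ^ 2)))
        = (r₀ ^ 2 / 4) * (2 * h (r₀ ^ 2) - sin (2 * h (r₀ ^ 2)))) ∧
    (∃ r₁ > (0 : ℝ), ∀ r₀ : ℝ, 0 < r₀ → r₀ < r₁ → 0 < h (r₀ ^ 2)) ∧
    Filter.Tendsto (fun r₀ : ℝ => h (r₀ ^ 2)) (nhdsWithin 0 (Set.Ioi 0)) (nhds 0) := by
  have h0mem : (0:ℝ) ∈ Set.Ioo (-ε₀) ε₀ := ⟨by linarith, hε₀⟩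
  have hUcont : ContinuousAt U 0 := (hU 0 h0mem).continuousAt
  have hU0pos : 0 < U 0 := by
    rw [hU0]; positivity
  refine ⟨?_, ?_, ?_⟩
  · intro r₀ hr hrε
    have hmem : r₀ ^ 2 + 0 ^ 2 < ε₀ := by simpa using hrε
    set t := h (r₀ ^ 2) with ht
    have hxy : (r₀ * cos t) ^ 2 + (r₀ * sin t) ^ 2 = r₀ ^ 2 := by
      have := sin_sq_add_cos_sq t; nlinarith
    have hmem2 : (r₀ * cos t) ^ 2 + (r₀ * sin t) ^ 2 < ε₀ := by rw [hxy]; exact hrε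
    have hf2 := hf _ _ hmem2
    have hg2 := hg _ _ hmem2
    rw [hxy] at hf2 hg2
    have hsol' := hsol (r₀ ^ 2) ⟨by nlinarith, hrε⟩
    refine ⟨?_, ?_, ?_, ?_⟩
    · rw [hf r₀ 0 hmem]; ring
    · rw [hg r₀ 0 hmem]; ring
    · rw [hf2]; ring
    · rw [hg2, sin_two_mul]
      linear_combination (r₀ ^ 2 / 2) * hsol'
  · have hev : ∀ᶠ s in nhds (0:ℝ), 0 < U s :=
      hUcont.eventually (eventually_gt_nhds hU0pos)
    obtain ⟨δ, hδ, hδ'⟩ := Metric.eventually_nhds_iff.mp hev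
    refine ⟨Real.sqrt δ, Real.sqrt_pos.mpr hδ, fun r₀ hr₀ hr₁ => ?_⟩
    have hlt : r₀ ^ 2 < δ := by
      have : r₀ ^ 2 < Real.sqrt δ ^ 2 := by nlinarith
      rwa [Real.sq_sqrt hδ.le] at this
    have hUpos : 0 < U (r₀ ^ 2) := by
      apply hδ'
      rw [Real.dist_eq, sub_zero, abs_of_nonneg (sq_nonneg r₀)]
      exact hlt
    rw [hh]
    positivity
  · have h1 : Filter.Tendsto (fun s : ℝ => s * U s) (nhds 0) (nhds 0) := by
      have : ContinuousAt (fun s : ℝ => s * U s) 0 := (continuousAt_id.mul hUcont)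
      simpa using this.tendsto
    have h2 : Filter.Tendsto (fun r₀ : ℝ => r₀ ^ 2) (nhdsWithin 0 (Set.Ioi 0)) (nhds 0) := by
      have : Filter.Tendsto (fun r₀ : ℝ => r₀ ^ 2) (nhds 0) (nhds 0) := by
        simpa using (continuous_pow 2).tendsto (0:ℝ)
      exact this.mono_left nhdsWithin_le_nhds
    simp_rw [hh]
    exact h1.comp h2
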